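/- If n > d ≥ 1 and r ≥ 2, then P(r·n, r·d) ≥ P(n, d)^r. -/
import Mathlib


/-- The Chebyshev distance between two permutations of `{1,…,n}`
(represented as permutations of `Fin n`): `max_i |σ(i) − τ(i)|`. -/
def permDist {n : ℕ} (σ τ : Equiv.Perm (Fin n)) : ℕ :=
  Finset.univ.sup fun i => Nat.dist (σ i : ℕ) (τ i : ℕ)

/-- `P n d` is the maximum cardinality of a set of permutations of `{1,…,n}`
whose pairwise Chebyshev distance is at least `d`. -/
noncomputable def P (n d : ℕ) : ℕ :=
  sSup {k | ∃ A : Finset (Equiv.Perm (Fin n)),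
    (∀ σ ∈ A, ∀ τ ∈ A, σ ≠ τ → d ≤ permDist σ τ) ∧ A.card = k}

section aux

variable {n r : ℕ}

/-- Identify `Fin (r*n)` with `Fin n × Fin r`, `(q,s) ↦ s + r*q`. -/
def myE (n r : ℕ) : Fin n × Fin r ≃ Fin (r * n) :=
  finProdFinEquiv.trans (finCongr (mul_comm n r))

lemma myE_val (q : Fin n) (s : Fin r) : ((myE n r) (q, s) : ℕ) = s + r * q := rfl

/-- Build a permutation of `Fin (r*n)` from an `r`-tuple of permutations of `Fin n`. -/
def bigPerm (f : Fin r → Equiv.Perm (Fin n)) : Equiv.Perm (Fin (r * n)) :=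
  ((myE n r).symm.trans
    ((Equiv.prodComm _ _).trans
      ((Equiv.prodShear (Equiv.refl (Fin r)) f).trans (Equiv.prodComm _ _)))).trans (myE n r)

lemma bigPerm_apply (f : Fin r → Equiv.Perm (Fin n)) (q : Fin n) (s : Fin r) :
    bigPerm f (myE n r (q, s)) = myE n r (f s q, s) := by
  simp [bigPerm, Equiv.prodShear]

lemma bigPerm_injective : Function.Injective (@bigPerm n r) := by
  intro f g h
  funext s
  ext q
  have := congrArg (fun π : Equiv.Perm (Fin (r * n)) => π (myE n r (q, s))) h
  simp only [bigPerm_apply] at this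
  have := (myE n r).injective this
  exact congrArg Fin.val (congrArg Prod.fst this)

end aux

/-- If `n > d ≥ 1` and `r ≥ 2`, then `P(r·n, r·d) ≥ P(n, d)^r`. -/
theorem stmt2 (n d r : ℕ) (hd : 1 ≤ d) (hn : d < n) (hr : 2 ≤ r) :
    P n d ^ r ≤ P (r * n) (r * d) := by
  -- the defining sets
  set S : Set ℕ := {k | ∃ A : Finset (Equiv.Perm (Fin n)),
    (∀ σ ∈ A, ∀ τ ∈ A, σ ≠ τ → d ≤ permDist σ τ) ∧ A.card = k} with hS
  have hSne : S.Nonempty := ⟨0, ∅, by simp⟩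
  have hSbdd : BddAbove S := by
    refine ⟨Fintype.card (Equiv.Perm (Fin n)), ?_⟩
    rintro k ⟨A, -, rfl⟩
    exact A.card_le_univ.trans (le_of_eq (Finset.card_univ))
  obtain ⟨A, hA, hAcard⟩ : P n d ∈ S := Nat.sSup_mem hSne hSbdd
  -- the big set
  set B : Finset (Equiv.Perm (Fin (r * n))) :=
    (Fintype.piFinset fun _ : Fin r => A).image bigPerm with hB
  have hBcard : B.card = P n d ^ r := by
    rw [hB, Finset.card_image_of_injective _ bigPerm_injective,
      Fintype.card_piFinset]
    simp [hAcard]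
  have hnpos : 0 < n := lt_of_le_of_lt (Nat.zero_le d) hn
  have hBdist : ∀ σ ∈ B, ∀ τ ∈ B, σ ≠ τ → r * d ≤ permDist σ τ := by
    rintro σ hσ τ hτ hne
    obtain ⟨f, hf, rfl⟩ := Finset.mem_image.mp hσ
    obtain ⟨g, hg, rfl⟩ := Finset.mem_image.mp hτ
    have hfg : f ≠ g := fun h => hne (congrArg _ h)
    obtain ⟨s, hs⟩ := Function.ne_iff.mp hfg
    have hmemf := Fintype.mem_piFinset.mp hf s
    have hmemg := Fintype.mem_piFinset.mp hg s
    have hdist : d ≤ permDist (f s) (g s) := hA _ hmemf _ hmemg hs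
    -- get a coordinate realizing the sup
    obtain ⟨q, -, hq⟩ := Finset.exists_mem_eq_sup (Finset.univ : Finset (Fin n))
      ⟨⟨0, hnpos⟩, Finset.mem_univ _⟩ (fun i => Nat.dist (f s i : ℕ) (g s i : ℕ))
    have hqd : d ≤ Nat.dist (f s q : ℕ) (g s q : ℕ) := by
      rw [permDist, hq] at hdist; exact hdist
    have key : Nat.dist (bigPerm f (myE n r (q, s)) : ℕ) (bigPerm g (myE n r (q, s)) : ℕ)
        = r * Nat.dist (f s q : ℕ) (g s q : ℕ) := by
      rw [bigPerm_apply, bigPerm_apply, myE_val, myE_val, Nat.dist_add_add_left,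
        Nat.dist_mul_left]
    calc r * d ≤ r * Nat.dist (f s q : ℕ) (g s q : ℕ) := Nat.mul_le_mul_left r hqd
      _ = _ := key.symm
      _ ≤ permDist (bigPerm f) (bigPerm g) :=
        Finset.le_sup (f := fun i : Fin (r * n) => Nat.dist (bigPerm f i : ℕ) (bigPerm g i : ℕ))
          (Finset.mem_univ (myE n r (q, s)))
  have hmem : P n d ^ r ∈ {k | ∃ A : Finset (Equiv.Perm (Fin (r * n))),
      (∀ σ ∈ A, ∀ τ ∈ A, σ ≠ τ → r * d ≤ permDist σ τ) ∧ A.card = k} :=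
    ⟨B, hBdist, hBcard⟩
  have hbdd : BddAbove {k | ∃ A : Finset (Equiv.Perm (Fin (r * n))),
      (∀ σ ∈ A, ∀ τ ∈ A, σ ≠ τ → r * d ≤ permDist σ τ) ∧ A.card = k} := by
    refine ⟨Fintype.card (Equiv.Perm (Fin (r * n))), ?_⟩
    rintro k ⟨A, -, rfl⟩
    exact A.card_le_univ.trans (le_of_eq (Finset.card_univ))
  exact le_csSup hbdd hmem
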